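/- arXiv:1605.07322 — 12 statements merged into one kernel-verified Lean document; each statement's English description precedes it below -/
import Mathlib

section
/- Let H = (U, V, E) be a bipartite graph and M ⊆ E a set of edges. If there exists a chain completion of M in H (a chain subgraph of H containing all edges of M), then there is no alternating cycle of M relative to H. -/
/-- Two edges (u1,v1), (u2,v2) are in conflict in the bipartite graph with
edge relation `E`: both are edges and both cross pairs are non-edges. -/
def Confl {U V : Type*} (E : U → V → Prop) (u1 : U) (v1 : V) (u2 : U) (v2 : V) : Prop :=
  E u1 v1 ∧ E u2 v2 ∧ ¬E u1 v2 ∧ ¬E u2 v1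

/-- A bipartite graph (given by its edge relation) has no induced 2K2. -/
def NoInduced2K2 {U V : Type*} (E : U → V → Prop) : Prop :=
  ¬ ∃ u1 u2 v1 v2, E u1 v1 ∧ E u2 v2 ∧ ¬E u1 v2 ∧ ¬E u2 v1

/-- An edge is committed if it is in conflict with another edge. -/
def Committed {U V : Type*} (E : U → V → Prop) (u : U) (v : V) : Prop :=
  ∃ u' v', Confl E u v u' v'

/-- An alternating cycle of `M` relative to the graph with edges `E`, of length `2k`. -/
def AltCycleK {U V : Type*} (E M : U → V → Prop) (k : ℕ) : Prop :=
  ∃ (u : ZMod k → U) (v : ZMod k → V), Function.Injective u ∧ Function.Injective v ∧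
    ∀ i : ZMod k, ¬E (u i) (v i) ∧ M (u (i + 1)) (v i)

/-- An alternating cycle of `M` relative to `E` (some length `2k`, `k ≥ 2`). -/
def AltCycle {U V : Type*} (E M : U → V → Prop) : Prop :=
  ∃ k : ℕ, 2 ≤ k ∧ AltCycleK E M k

/-- `(Er, Eb)` is a bipartition of the committed edges of `E`. -/
def Bipartition {U V : Type*} (E Er Eb : U → V → Prop) : Prop :=
  (∀ u v, Committed E u v ↔ (Er u v ∨ Eb u v)) ∧ ∀ u v, ¬(Er u v ∧ Eb u v)

/-- No configuration (A1): no two conflicting edges both in `Er`. -/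
def NoA1 {U V : Type*} (E Er : U → V → Prop) : Prop :=
  ¬ ∃ u1 u2 v1 v2, Er u1 v1 ∧ Er u2 v2 ∧ ¬E u1 v2 ∧ ¬E u2 v1

/-- No configuration (B1): no `u1v1, u2v2 ∈ Er`, `u2v1 ∈ Eb`, `u1v2 ∉ E`. -/
def NoB1 {U V : Type*} (E Er Eb : U → V → Prop) : Prop :=
  ¬ ∃ u1 u2 v1 v2, Er u1 v1 ∧ Er u2 v2 ∧ Eb u2 v1 ∧ ¬E u1 v2

/-- No configuration (C): no `u1v1, u2v2 ∈ Er`, `u1v2 ∉ E`, `u2v1 ∈ F`. -/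
def NoC {U V : Type*} (E F Er : U → V → Prop) : Prop :=
  ¬ ∃ u1 u2 v1 v2, Er u1 v1 ∧ Er u2 v2 ∧ ¬E u1 v2 ∧ F u2 v1

/-- `(Er, Eb)` is (A, C)-free. -/
def ACFree {U V : Type*} (E F Er Eb : U → V → Prop) : Prop :=
  NoA1 E Er ∧ NoA1 E Eb ∧ NoC E F Er

/-- `(Er, Eb)` is (A, B, C)-free. -/
def ABCFree {U V : Type*} (E F Er Eb : U → V → Prop) : Prop :=
  ACFree E F Er Eb ∧ NoB1 E Er Eb ∧ NoB1 E Eb Er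

/-- `(E1, E2)` is a 2-chain subgraph cover of the bipartite graph with edge set `E`. -/
def ChainCover {U V : Type*} (E E1 E2 : U → V → Prop) : Prop :=
  (∀ u v, E1 u v → E u v) ∧ (∀ u v, E2 u v → E u v) ∧
  (∀ u v, E u v ↔ E1 u v ∨ E2 u v) ∧ NoInduced2K2 E1 ∧ NoInduced2K2 E2

/-- If `M` has a chain completion in `H`, then there is no alternating cycle
of `M` relative to `H`. -/
theorem stmt2 {U V : Type*} (E M : U → V → Prop) (hME : ∀ u v, M u v → E u v)
    (h : ∃ E' : U → V → Prop, (∀ u v, M u v → E' u v) ∧ (∀ u v, E' u v → E u v) ∧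
      NoInduced2K2 E') :
    ¬ AltCycle E M := by
  rintro ⟨k, hk, u, v, _, _, hcyc⟩
  obtain ⟨E', hM, hE, h2⟩ := h
  -- key: for all j : ℕ, E' (u (j+1)) (v 0)
  have key : ∀ j : ℕ, E' (u ((j : ZMod k) + 1)) (v 0) := by
    intro j
    induction j with
    | zero =>
      have := hM _ _ (hcyc 0).2
      simpa using this
    | succ n ih =>
      by_contra hne
      apply h2
      refine ⟨u ((n : ZMod k) + 1), u ((n : ZMod k) + 2), v 0, v ((n : ZMod k) + 1),
        ih, hM _ _ ?_, ?_, ?_⟩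
      · have := (hcyc ((n : ZMod k) + 1)).2
        convert this using 2 <;> ring
      · intro hE'
        exact (hcyc ((n : ZMod k) + 1)).1 (hE _ _ hE')
      · intro hE'
        apply hne
        convert hE' using 2
        push_cast
        ring
  have hk0 : (0 : ZMod k) = ((k - 1 : ℕ) : ZMod k) + 1 := by
    have : ((k : ℕ) : ZMod k) = 0 := ZMod.natCast_self k
    have h1 : (1 : ℕ) ≤ k := by omega
    rw [← this]
    push_cast [h1]
    ring
  exact (hcyc 0).1 (hE _ _ (hk0 ▸ key (k - 1)))
end

section
/- Let H = (U, V, E) be a finite bipartite graph and M ⊆ E a set of edges. If there is no alternating cycle of M relative to H, then M has a chain completion in H, i.e., there exists an edge set E' with M ⊆ E' ⊆ E such that (U, V, E') has no induced 2K2. -/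
/-- Weak (not-necessarily-injective) cycle, ZMod form. -/
def WZ {U V : Type*} (E M : U → V → Prop) (k : ℕ) : Prop :=
  ∃ (u : ZMod k → U) (v : ZMod k → V),
    ∀ i : ZMod k, ¬E (u i) (v i) ∧ M (u (i + 1)) (v i)

lemma mkWZ {U V : Type*} (E M : U → V → Prop) (d : ℕ) (hd : 0 < d)
    (c : ℕ → U) (w : ℕ → V)
    (h1 : ∀ t < d, ¬E (c t) (w t))
    (h2 : ∀ t < d, M (c ((t + 1) % d)) (w t)) : WZ E M d := by
  haveI : NeZero d := ⟨hd.ne'⟩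
  refine ⟨fun i => c i.val, fun i => w i.val, fun i => ?_⟩
  have hv : i.val < d := ZMod.val_lt i
  have hval : (i + 1).val = (i.val + 1) % d := by
    rw [ZMod.val_add, ZMod.val_one_eq_one_mod]
    conv_rhs => rw [Nat.add_mod]
    rw [Nat.mod_eq_of_lt hv]
  exact ⟨h1 _ hv, by simp only []; rw [hval]; exact h2 _ hv⟩

lemma path_of_transGen {U V : Type*} (E M : U → V → Prop)
    {a b : U} (h : Relation.TransGen (fun a b => ∃ v, ¬E a v ∧ M b v) a b) :
    ∃ (d : ℕ) (c : ℕ → U) (w : ℕ → V), 0 < d ∧ c 0 = a ∧ c d = b ∧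
      (∀ t < d, ¬E (c t) (w t)) ∧ (∀ t < d, M (c (t + 1)) (w t)) := by
  induction h with
  | single hr =>
    obtain ⟨v, hv1, hv2⟩ := hr
    rename_i b'
    exact ⟨1, fun t => if t = 0 then a else b', fun _ => v, one_pos, rfl, rfl,
      fun t ht => by interval_cases t; simpa using hv1,
      fun t ht => by interval_cases t; simpa using hv2⟩
  | tail h1 hr ih =>
    rename_i b' c'
    obtain ⟨v, hv1, hv2⟩ := hr
    obtain ⟨d, c, w, hd, hc0, hcd, hE, hM⟩ := ih
    refine ⟨d + 1, fun t => if t ≤ d then c t else c', fun t => if t < d then w t else v,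
      Nat.succ_pos d, by simp [hc0], by simp, ?_, ?_⟩
    · intro t ht
      rcases lt_or_ge t d with h' | h'
      · simpa [le_of_lt h', h'] using hE t h'
      · have : t = d := by omega
        subst this
        simpa [hcd] using hv1
    · intro t ht
      rcases lt_or_ge t d with h' | h'
      · simpa [h', Nat.succ_le_of_lt h'] using hM t h'
      · have : t = d := by omega
        subst this
        simpa using hv2

lemma shrinkWZ {U V : Type*} (E M : U → V → Prop) {n : ℕ} [NeZero n]
    (cz : ZMod n → U) (wz : ZMod n → V)
    (hcyc : ∀ i : ZMod n, ¬E (cz i) (wz i) ∧ M (cz (i + 1)) (wz i))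
    (a : ZMod n) (e : ℕ) (he0 : 0 < e)
    (hkey : M (cz a) (wz (a + ((e - 1 : ℕ) : ZMod n)))) : WZ E M e := by
  apply mkWZ E M e he0 (fun t => cz (a + (t : ZMod n))) (fun t => wz (a + (t : ZMod n)))
  · intro t _
    exact (hcyc _).1
  · intro t ht
    rcases Nat.lt_or_ge (t + 1) e with h' | h'
    · rw [Nat.mod_eq_of_lt h']
      have := (hcyc (a + (t : ZMod n))).2
      show M (cz (a + ((t + 1 : ℕ) : ZMod n))) (wz (a + (t : ZMod n)))
      convert this using 2
      push_cast
      ring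
    · have hte : t = e - 1 := by omega
      rw [show t + 1 = e by omega, Nat.mod_self]
      subst hte
      simpa using hkey

lemma transGen_irrefl {U V : Type*} (E M : U → V → Prop)
    (hME : ∀ u v, M u v → E u v)
    (h : ¬ ∃ k : ℕ, 2 ≤ k ∧ AltCycleK E M k) (u : U) :
    ¬ Relation.TransGen (fun a b => ∃ v, ¬E a v ∧ M b v) u u := by
  classical
  intro hT
  obtain ⟨d, c, w, hd, hc0, hcd, hE, hM⟩ := path_of_transGen E M hT
  have hex : ∃ n, 0 < n ∧ WZ E M n := by
    refine ⟨d, hd, mkWZ E M d hd c w hE ?_⟩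
    intro t ht
    rcases Nat.lt_or_ge (t + 1) d with h' | h'
    · rw [Nat.mod_eq_of_lt h']; exact hM t ht
    · have htd : t + 1 = d := by omega
      rw [htd, Nat.mod_self, hc0, ← hcd, ← htd]
      exact hM t ht
  set P : ℕ → Prop := fun n => 0 < n ∧ WZ E M n with hP
  have hPex : ∃ n, P n := hex
  set n := Nat.find hPex with hndef
  obtain ⟨hn, cz, wz, hcyc⟩ : P n := Nat.find_spec hPex
  have hmin : ∀ m, m < n → ¬ P m := fun m hm => Nat.find_min hPex hm
  haveI : NeZero n := ⟨hn.ne'⟩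
  have hn1 : n ≠ 1 := by
    intro h1
    haveI : Subsingleton (ZMod n) := by rw [h1]; infer_instance
    obtain ⟨h1', h2'⟩ := hcyc 0
    rw [Subsingleton.elim (0 + 1 : ZMod n) 0] at h2'
    exact h1' (hME _ _ h2')
  have hn2 : 2 ≤ n := by omega
  have castval : ∀ x : ZMod n, ((x.val : ℕ) : ZMod n) = x :=
    fun x => ZMod.natCast_rightInverse x
  have valpos : ∀ x : ZMod n, x ≠ 0 → 0 < x.val := by
    intro x hx
    exact Nat.pos_of_ne_zero (fun h' => hx ((ZMod.val_eq_zero _).mp h'))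
  have cast_sub_one : ∀ e : ℕ, 0 < e → ((e - 1 : ℕ) : ZMod n) = (e : ℕ) - 1 := by
    intro e he
    have h5 : e - 1 + 1 = e := by omega
    have : (((e - 1) + 1 : ℕ) : ZMod n) = ((e - 1 : ℕ) : ZMod n) + 1 := by push_cast; ring
    rw [h5] at this
    rw [this]
    ring
  have hinjc : Function.Injective cz := by
    intro i j hij
    by_contra hne
    have hsub : j - i ≠ 0 := sub_ne_zero.mpr (Ne.symm hne)
    set e : ℕ := (j - i).val with he
    have he0 : 0 < e := valpos _ hsub
    have hen : e < n := ZMod.val_lt _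
    have hecast : ((e : ℕ) : ZMod n) = j - i := castval _
    refine hmin e hen ⟨he0, shrinkWZ E M cz wz hcyc i e he0 ?_⟩
    have key := (hcyc (i + ((e - 1 : ℕ) : ZMod n))).2
    have harg : i + ((e - 1 : ℕ) : ZMod n) + 1 = j := by
      rw [cast_sub_one e he0, hecast]
      ring
    rw [harg, ← hij] at key
    exact key
  have hinjw : Function.Injective wz := by
    intro i j hij
    by_contra hne
    have hsub : i - j ≠ 0 := sub_ne_zero.mpr hne
    set e : ℕ := (i - j).val with he
    have he0 : 0 < e := valpos _ hsub
    have hen : e < n := ZMod.val_lt _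
    have hecast : ((e : ℕ) : ZMod n) = i - j := castval _
    refine hmin e hen ⟨he0, shrinkWZ E M cz wz hcyc (j + 1) e he0 ?_⟩
    have harg : j + 1 + ((e - 1 : ℕ) : ZMod n) = i := by
      rw [cast_sub_one e he0, hecast]
      ring
    rw [harg, hij]
    exact (hcyc j).2
  exact h ⟨n, hn2, cz, wz, hinjc, hinjw, hcyc⟩


/-- If there is no alternating cycle of `M` relative to the finite bipartite
graph `H`, then `M` has a chain completion in `H`. -/
theorem stmt3 {U V : Type*} [Fintype U] [Fintype V] (E M : U → V → Prop)
    (hME : ∀ u v, M u v → E u v) (h : ¬ AltCycle E M) :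
    ∃ E' : U → V → Prop, (∀ u v, M u v → E' u v) ∧ (∀ u v, E' u v → E u v) ∧
      NoInduced2K2 E' := by
  classical
  set R : U → U → Prop := fun a b => ∃ v, ¬E a v ∧ M b v with hR
  have hirr := transGen_irrefl E M hME h
  set r : U → U → Prop := fun a b => a = b ∨ Relation.TransGen R a b with hr
  haveI : IsPartialOrder U r :=
    { refl := fun a => Or.inl rfl
      trans := by
        rintro a b c (rfl | hab) (rfl | hbc)
        · exact Or.inl rfl
        · exact Or.inr hbc
        · exact Or.inr hab
        · exact Or.inr (hab.trans hbc)
      antisymm := by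
        rintro a b (rfl | hab) (h' | hba)
        · rfl
        · rfl
        · exact h'.symm
        · exact absurd (hab.trans hba) (hirr a) }
  obtain ⟨s, hs, hrs⟩ := extend_partialOrder r
  haveI := hs
  refine ⟨fun u v => ∃ u', s u' u ∧ M u' v, ?_, ?_, ?_⟩
  · exact fun u v hM' => ⟨u, refl_of s u, hM'⟩
  · rintro u v ⟨u', hsu, hM'⟩
    by_contra hEuv
    have huu' : u ≠ u' := by
      rintro rfl
      exact hEuv (hME _ _ hM')
    have : s u u' := hrs _ _ (Or.inr (Relation.TransGen.single ⟨v, hEuv, hM'⟩))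
    exact huu' (antisymm_of s this hsu)
  · rintro ⟨u1, u2, v1, v2, ⟨a, ha, hMa⟩, ⟨b, hb, hMb⟩, h12, h21⟩
    rcases total_of s u1 u2 with h' | h'
    · exact h21 ⟨a, trans_of s ha h', hMa⟩
    · exact h12 ⟨b, trans_of s hb h', hMb⟩
end

section
/- Let H = (U, V, E) be a finite bipartite graph and M ⊆ E. If every vertex of H is incident to at least one edge of M and also incident to at least one non-edge (a pair with the other side not in E), then there exists an alternating cycle of M relative to H. -/
/-- If every vertex of a finite bipartite graph is incident to an edge of `M`
and to a non-edge, then there is an alternating cycle of `M` relative to `H`. -/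
theorem stmt4 {U V : Type*} [Fintype U] [Fintype V] [Nonempty U] [Nonempty V]
    (E M : U → V → Prop) (hME : ∀ u v, M u v → E u v)
    (hMU : ∀ u : U, ∃ v, M u v) (hMV : ∀ v : V, ∃ u, M u v)
    (hEU : ∀ u : U, ∃ v, ¬E u v) (hEV : ∀ v : V, ∃ u, ¬E u v) :
    AltCycle E M := by
  classical
  choose f hf using hEU
  choose g hg using hMV
  set h : U → U := fun u => g (f u) with hhdef
  -- find a periodic point
  have hper : ∃ n : ℕ, 0 < n ∧ ∃ x : U, h^[n] x = x := by
    set x₀ := Classical.arbitrary U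
    obtain ⟨a, b, hne, heq⟩ :=
      Finite.exists_ne_map_eq_of_infinite (fun n : ℕ => h^[n] x₀)
    rcases hne.lt_or_gt with hab | hab
    · exact ⟨b - a, by omega, h^[a] x₀, by
        rw [← Function.iterate_add_apply]
        rw [Nat.sub_add_cancel hab.le]
        exact heq.symm⟩
    · exact ⟨a - b, by omega, h^[b] x₀, by
        rw [← Function.iterate_add_apply]
        rw [Nat.sub_add_cancel hab.le]
        exact heq⟩
  set k := Nat.find hper with hkdef
  obtain ⟨hk0, x, hx⟩ := Nat.find_spec hper
  have hmin : ∀ m, 0 < m → m < k → ∀ y : U, h^[m] y ≠ y := by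
    intro m hm0 hmk y hy
    exact Nat.find_min hper hmk ⟨hm0, y, hy⟩
  -- k ≥ 2
  have hk2 : 2 ≤ k := by
    by_contra hlt
    have hk1 : k = 1 := by omega
    rw [← hkdef] at hx
    have : h x = x := by rw [hk1] at hx; simpa using hx
    have hM : M (g (f x)) (f x) := hg (f x)
    rw [show g (f x) = h x from rfl, this] at hM
    exact hf x (hME _ _ hM)
  haveI : NeZero k := ⟨by omega⟩
  haveI : Fact (1 < k) := ⟨by omega⟩
  have hpp : Function.IsPeriodicPt h k x := hx
  have hmod : ∀ m : ℕ, h^[m % k] x = h^[m] x := fun m => hpp.iterate_mod_apply m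
  -- distinctness of iterates below k
  have hdist : ∀ a b : ℕ, a < k → b < k → h^[a] x = h^[b] x → a = b := by
    intro a b ha hb heq
    by_contra hne
    wlog hab : a < b generalizing a b
    · exact this b a hb ha heq.symm (Ne.symm hne) (by omega)
    have : h^[k - b + a] x = x := by
      rw [Function.iterate_add_apply, heq, ← Function.iterate_add_apply,
        Nat.sub_add_cancel hb.le]
      exact hx
    exact hmin (k - b + a) (by omega) (by omega) x this
  refine ⟨k, hk2, fun i => h^[i.val] x, fun i => f (h^[i.val] x), ?_, ?_, ?_⟩
  · intro i j hij
    have := hdist i.val j.val (ZMod.val_lt i) (ZMod.val_lt j) hij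
    exact ZMod.val_injective k this
  · intro i j hij
    have h1 : h^[i.val + 1] x = h^[j.val + 1] x := by
      simp only [Function.iterate_succ_apply']
      exact congrArg g hij
    rw [← hmod (i.val + 1), ← hmod (j.val + 1)] at h1
    have := hdist _ _ (Nat.mod_lt _ (by omega)) (Nat.mod_lt _ (by omega)) h1
    have h2 : (i + 1 : ZMod k) = (j + 1 : ZMod k) := by
      have hv : ∀ m : ZMod k, ((m + 1 : ZMod k)).val = (m.val + 1) % k := by
        intro m
        rw [ZMod.val_add, ZMod.val_one]
      apply ZMod.val_injective
      rw [hv i, hv j, this]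
    exact add_right_cancel h2
  · intro i
    refine ⟨hf _, ?_⟩
    have hv : ((i + 1 : ZMod k)).val = (i.val + 1) % k := by
      rw [ZMod.val_add, ZMod.val_one]
    have : h^[(i + 1 : ZMod k).val] x = g (f (h^[i.val] x)) := by
      rw [hv, hmod, Function.iterate_succ_apply']
    show M (h^[(i + 1 : ZMod k).val] x) (f (h^[i.val] x))
    rw [this]
    exact hg _
end

section
/- Let G = (U, V, E) be a bipartite graph with a 2-chain subgraph cover (G_1, G_2), and color committed edges red (E_r) if in G_1 and blue (E_b) otherwise. Then there is no configuration (B_1): there do not exist u_1, u_2 ∈ U and v_1, v_2 ∈ V with u_1v_1, u_2v_2 ∈ E_r, u_2v_1 ∈ E_b, and u_1v_2 ∉ E. -/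
/-- The red/blue coloring coming from a 2-chain subgraph cover contains no
configuration (B1). -/
theorem stmt7 {U V : Type*} (E E1 E2 : U → V → Prop) (hcover : ChainCover E E1 E2) :
    NoB1 E (fun u v => Committed E u v ∧ E1 u v)
          (fun u v => Committed E u v ∧ E2 u v ∧ ¬E1 u v) := by
  rintro ⟨u1, u2, v1, v2, ⟨-, h1⟩, ⟨-, h2⟩, ⟨-, -, h3⟩, h4⟩
  obtain ⟨hE1, -, -, hK1, -⟩ := hcover
  exact hK1 ⟨u1, u2, v1, v2, h1, h2, fun h => h4 (hE1 _ _ h), h3⟩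
end

section
/- Let G = (U, V, E) be a bipartite graph, F ⊆ E, E_c the committed edges, E_u the uncommitted edges, and (E_r, E_b) an (A, B, C)-free bipartition of E_c with F ∩ E_c ⊆ E_b. Then the subgraph of G induced by the edge set E_b ∪ E_u is a chain graph (has no induced 2K2 using only edges of E_b ∪ E_u and non-edges of G). -/
/-- Given an (A, B, C)-free bipartition of the committed edges, the subgraph
induced by the blue and uncommitted edges is a chain graph. -/
theorem stmt9 {U V : Type*} (E F Er Eb : U → V → Prop) (hFE : ∀ u v, F u v → E u v)
    (hpart : Bipartition E Er Eb) (habc : ABCFree E F Er Eb)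
    (hFb : ∀ u v, F u v → Committed E u v → Eb u v) :
    NoInduced2K2 (fun u v => Eb u v ∨ (E u v ∧ ¬Committed E u v)) := by
  obtain ⟨hcomm, hdisj⟩ := hpart
  obtain ⟨⟨hA1, hA2, hC⟩, hB1, hB2⟩ := habc
  have hErC : ∀ a b, Er a b → Committed E a b := fun a b h => (hcomm a b).mpr (Or.inl h)
  have hEbC : ∀ a b, Eb a b → Committed E a b := fun a b h => (hcomm a b).mpr (Or.inr h)
  have hCE : ∀ a b, Committed E a b → E a b := by rintro a b ⟨x, y, hE, -⟩; exact hE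
  have hE'E : ∀ a b, (Eb a b ∨ (E a b ∧ ¬Committed E a b)) → E a b := by
    rintro a b (h | ⟨h, -⟩)
    exacts [hCE a b (hEbC a b h), h]
  have hE'b : ∀ a b, (Eb a b ∨ (E a b ∧ ¬Committed E a b)) → Committed E a b → Eb a b := by
    rintro a b (h | ⟨-, hn⟩) hc
    exacts [h, absurd hc hn]
  have hErEb : ∀ a b, Committed E a b → ¬Eb a b → Er a b := by
    intro a b hc hnb
    rcases (hcomm a b).mp hc with h | h
    exacts [h, absurd h hnb]
  have hEbEr : ∀ a b, Committed E a b → ¬Er a b → Eb a b := by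
    intro a b hc hnb
    rcases (hcomm a b).mp hc with h | h
    exacts [absurd h hnb, h]
  -- Key lemma: the case where exactly one cross pair is an edge of `E` (and red).
  have key : ∀ a b c d, (Eb a c ∨ (E a c ∧ ¬Committed E a c)) →
      (Eb b d ∨ (E b d ∧ ¬Committed E b d)) → Er a d → ¬E b c → False := by
    intro a b c d h11 h22 hR hn21
    obtain ⟨x, y, hEad, hExy, hnay, hnxd⟩ := hErC a d hR
    have hbxy : Eb x y := by
      by_contra hnb
      exact hA1 ⟨a, x, d, y, hR, hErEb x y ⟨a, d, hExy, hEad, hnxd, hnay⟩ hnb, hnay, hnxd⟩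
    have hExc : E x c := by
      by_contra hnxc
      exact hA2 ⟨a, x, c, y, hE'b a c h11 ⟨x, y, hE'E a c h11, hExy, hnay, hnxc⟩,
        hbxy, hnay, hnxc⟩
    have hCxc : Committed E x c := ⟨b, d, hExc, hE'E b d h22, hnxd, hn21⟩
    have hbbd : Eb b d := hE'b b d h22 ⟨x, c, hE'E b d h22, hExc, hn21, hnxd⟩
    have hrxc : Er x c := by
      by_contra hnb
      exact hA2 ⟨x, b, c, d, hEbEr x c hCxc hnb, hbbd, hnxd, hn21⟩
    have hEby : E b y := by
      by_contra hnby
      exact hA2 ⟨b, x, d, y, hbbd, hbxy, hnby, hnxd⟩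
    have hbac : Eb a c := hE'b a c h11 ⟨b, y, hE'E a c h11, hEby, hnay, hn21⟩
    exact hB1 ⟨x, a, c, d, hrxc, hR, hbac, hnxd⟩
  rintro ⟨u1, u2, v1, v2, h1, h2, h3, h4⟩
  simp only [not_or, not_and, not_not] at h3 h4
  by_cases e12 : E u1 v2 <;> by_cases e21 : E u2 v1
  · -- Case 4: both cross pairs are edges, hence both red.
    have R12 : Er u1 v2 := hErEb u1 v2 (h3.2 e12) h3.1
    have R21 : Er u2 v1 := hErEb u2 v1 (h4.2 e21) h4.1
    have e11 : E u1 v1 := hE'E u1 v1 h1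
    have e22 : E u2 v2 := hE'E u2 v2 h2
    obtain ⟨x, y, -, hExy, hn1y, hnx2⟩ := hErC u1 v2 R12
    obtain ⟨z, w, -, hEzw, hn2w, hnz1⟩ := hErC u2 v1 R21
    have hbxy : Eb x y := by
      by_contra hnb
      exact hA1 ⟨u1, x, v2, y, R12, hErEb x y ⟨u1, v2, hExy, e12, hnx2, hn1y⟩ hnb, hn1y, hnx2⟩
    have hbzw : Eb z w := by
      by_contra hnb
      exact hA1 ⟨u2, z, v1, w, R21, hErEb z w ⟨u2, v1, hEzw, e21, hnz1, hn2w⟩ hnb, hn2w, hnz1⟩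
    have hEx1 : E x v1 := by
      by_contra hnx1
      exact hA2 ⟨u1, x, v1, y, hE'b u1 v1 h1 ⟨x, y, e11, hExy, hn1y, hnx1⟩, hbxy, hn1y, hnx1⟩
    have hEz2 : E z v2 := by
      by_contra hnz2
      exact hA2 ⟨u2, z, v2, w, hE'b u2 v2 h2 ⟨z, w, e22, hEzw, hn2w, hnz2⟩, hbzw, hn2w, hnz2⟩
    have hCx1 : Committed E x v1 := ⟨z, v2, hEx1, hEz2, hnx2, hnz1⟩
    have hCz2 : Committed E z v2 := ⟨x, v1, hEz2, hEx1, hnz1, hnx2⟩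
    by_cases hxw : E x w
    · -- x-w is an edge; it conflicts with u2-v2.
      have hb22 : Eb u2 v2 := hE'b u2 v2 h2 ⟨x, w, e22, hxw, hn2w, hnx2⟩
      have hrxw : Er x w := by
        by_contra hnb
        exact hA2 ⟨x, u2, w, v2, hEbEr x w ⟨u2, v2, hxw, e22, hnx2, hn2w⟩ hnb, hb22, hnx2, hn2w⟩
      by_cases hbx1 : Eb x v1
      · exact hB1 ⟨u2, x, v1, w, R21, hrxw, hbx1, hn2w⟩
      · have hrx1 : Er x v1 := hErEb x v1 hCx1 hbx1
        have hbz2 : Eb z v2 := by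
          by_contra hnb
          exact hA1 ⟨x, z, v1, v2, hrx1, hErEb z v2 hCz2 hnb, hnx2, hnz1⟩
        by_cases hzy : E z y
        · have hb11 : Eb u1 v1 := hE'b u1 v1 h1 ⟨z, y, e11, hzy, hn1y, hnz1⟩
          exact hB2 ⟨z, u1, v2, v1, hbz2, hb11, R12, hnz1⟩
        · exact hA2 ⟨z, x, v2, y, hbz2, hbxy, hzy, hnx2⟩
    · -- x-w is a non-edge; x-v1 conflicts with z-w, so x-v1 is red.
      have hrx1 : Er x v1 := by
        by_contra hnb
        exact hA2 ⟨x, z, v1, w, hEbEr x v1 hCx1 hnb, hbzw, hxw, hnz1⟩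
      by_cases hzy : E z y
      · have hb11 : Eb u1 v1 := hE'b u1 v1 h1 ⟨z, y, e11, hzy, hn1y, hnz1⟩
        exact hB1 ⟨x, u1, v1, v2, hrx1, R12, hb11, hnx2⟩
      · exact hA2 ⟨x, z, y, w, hbxy, hbzw, hxw, hzy⟩
  · -- Case 2: u1-v2 is an edge (red), u2-v1 is a non-edge.
    exact key u1 u2 v1 v2 h1 h2 (hErEb u1 v2 (h3.2 e12) h3.1) e21
  · -- Case 3: symmetric to case 2.
    exact key u2 u1 v2 v1 h2 h1 (hErEb u2 v1 (h4.2 e21) h4.1) e12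
  · -- Case 1: both cross pairs are non-edges: u1-v1 and u2-v2 conflict.
    exact hA2 ⟨u1, u2, v1, v2, hE'b u1 v1 h1 ⟨u2, v2, hE'E u1 v1 h1, hE'E u2 v2 h2, e12, e21⟩,
      hE'b u2 v2 h2 ⟨u1, v1, hE'E u2 v2 h2, hE'E u1 v1 h1, e21, e12⟩, e12, e21⟩
end

section
/- Let G = (U, V, E) be a bipartite graph, F ⊆ E, and (E_r, E_b) an (A, B, C)-free bipartition of the committed edges E_c with F ∩ E_c ⊆ E_b. Then no two edges of E_r are in conflict in G − F; that is, there are no u_1, u_2 ∈ U, v_1, v_2 ∈ V with u_1v_1, u_2v_2 ∈ E_r and u_1v_2, u_2v_1 ∈ (E \ E) ∪ F (i.e., each of u_1v_2 and u_2v_1 is either a non-edge of G or an edge of F). -/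
/-- Given an (A, B, C)-free bipartition of the committed edges, no two red
edges are in conflict in `G - F`. -/
theorem stmt10 {U V : Type*} (E F Er Eb : U → V → Prop) (hFE : ∀ u v, F u v → E u v)
    (hpart : Bipartition E Er Eb) (habc : ABCFree E F Er Eb)
    (hFb : ∀ u v, F u v → Committed E u v → Eb u v) :
    ¬ ∃ (u1 u2 : U) (v1 v2 : V), Er u1 v1 ∧ Er u2 v2 ∧
      (¬E u1 v2 ∨ F u1 v2) ∧ (¬E u2 v1 ∨ F u2 v1) := by
  rintro ⟨u1, u2, v1, v2, hr1, hr2, h12, h21⟩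
  obtain ⟨⟨hA1r, hA1b, hC⟩, hB1, hB2⟩ := habc
  obtain ⟨hpc, hdisj⟩ := hpart
  have hc1 : Committed E u1 v1 := (hpc u1 v1).2 (Or.inl hr1)
  have hc2 : Committed E u2 v2 := (hpc u2 v2).2 (Or.inl hr2)
  obtain ⟨u', v', he11, he', h1v', hu'1⟩ := hc1
  obtain ⟨u'', v'', he22, he'', h2v'', hu''2⟩ := hc2
  cases h12 with
  | inl hn12 =>
    cases h21 with
    | inl hn21 => exact hA1r ⟨u1, u2, v1, v2, hr1, hr2, hn12, hn21⟩
    | inr hf21 => exact hC ⟨u1, u2, v1, v2, hr1, hr2, hn12, hf21⟩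
  | inr hf12 =>
    cases h21 with
    | inl hn21 => exact hC ⟨u2, u1, v2, v1, hr2, hr1, hn21, hf12⟩
    | inr hf21 =>
      have he12 : E u1 v2 := hFE _ _ hf12
      have he21 : E u2 v1 := hFE _ _ hf21
      have hbp : Eb u' v' := by
        have hcp : Committed E u' v' := ⟨u1, v1, he', he11, hu'1, h1v'⟩
        rcases (hpc u' v').1 hcp with h | h
        · exact absurd ⟨u1, u', v1, v', hr1, h, h1v', hu'1⟩ hA1r
        · exact h
      have hbp2 : Eb u'' v'' := by
        have hcp : Committed E u'' v'' := ⟨u2, v2, he'', he22, hu''2, h2v''⟩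
        rcases (hpc u'' v'').1 hcp with h | h
        · exact absurd ⟨u2, u'', v2, v'', hr2, h, h2v'', hu''2⟩ hA1r
        · exact h
      by_cases h'2 : E u' v2
      · by_cases h''1 : E u'' v1
        · have hcA : Committed E u' v2 := ⟨u'', v1, h'2, h''1, hu'1, hu''2⟩
          have hcB : Committed E u'' v1 := ⟨u', v2, h''1, h'2, hu''2, hu'1⟩
          have hbA : Eb u' v2 := by
            rcases (hpc u' v2).1 hcA with h | h
            · exact absurd ⟨u', u1, v2, v1, h, hr1, hu'1, hf12⟩ hC
            · exact h
          have hbB : Eb u'' v1 := by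
            rcases (hpc u'' v1).1 hcB with h | h
            · exact absurd ⟨u'', u2, v1, v2, h, hr2, hu''2, hf21⟩ hC
            · exact h
          exact hA1b ⟨u', u'', v2, v1, hbA, hbB, hu'1, hu''2⟩
        · have hc21 : Committed E u2 v1 := ⟨u'', v'', he21, he'', h2v'', h''1⟩
          have hb21 : Eb u2 v1 := hFb _ _ hf21 hc21
          exact hA1b ⟨u2, u'', v1, v'', hb21, hbp2, h2v'', h''1⟩
      · have hc12 : Committed E u1 v2 := ⟨u', v', he12, he', h1v', h'2⟩
        have hb12 : Eb u1 v2 := hFb _ _ hf12 hc12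
        exact hA1b ⟨u1, u', v2, v', hb12, hbp, h1v', h'2⟩
end

section
/- Let G = (U, V, E) be a bipartite graph, F ⊆ E, and (E_r, E_b) an (A, B, C)-free bipartition of the committed edges E_c with F ∩ E_c ⊆ E_b. Then there are no alternating cycles of E_r relative to G − F. -/
section StmtElevenAux

variable {U V : Type*} {E F Er Eb : U → V → Prop}

private lemma stmt11_red_E (hpart : Bipartition E Er Eb) {a : U} {b : V} (h : Er a b) :
    E a b := by
  obtain ⟨x, y, hc⟩ := (hpart.1 a b).mpr (Or.inl h)
  exact hc.1

private lemma stmt11_red_nF (hpart : Bipartition E Er Eb)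
    (hFb : ∀ u v, F u v → Committed E u v → Eb u v) {a : U} {b : V} (h : Er a b) :
    ¬ F a b := fun hF =>
  hpart.2 a b ⟨h, hFb a b hF ((hpart.1 a b).mpr (Or.inl h))⟩

private lemma stmt11_red_partner (hpart : Bipartition E Er Eb) (hA1r : NoA1 E Er)
    {a : U} {b : V} (h : Er a b) :
    ∃ s t, E s t ∧ ¬E a t ∧ ¬E s b ∧ Eb s t := by
  obtain ⟨s, t, hab, hst, hat, hsb⟩ := (hpart.1 a b).mpr (Or.inl h)
  have hcomm : Committed E s t := ⟨a, b, hst, hab, hsb, hat⟩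
  rcases (hpart.1 s t).mp hcomm with hr | hbl
  · exact absurd ⟨a, s, b, t, h, hr, hat, hsb⟩ hA1r
  · exact ⟨s, t, hst, hat, hsb, hbl⟩

private lemma stmt11_blue_partner (hpart : Bipartition E Er Eb) (hA1b : NoA1 E Eb)
    {a : U} {b : V} (h : Eb a b) :
    ∃ s t, E s t ∧ ¬E a t ∧ ¬E s b ∧ Er s t := by
  obtain ⟨s, t, hab, hst, hat, hsb⟩ := (hpart.1 a b).mpr (Or.inr h)
  have hcomm : Committed E s t := ⟨a, b, hst, hab, hsb, hat⟩
  rcases (hpart.1 s t).mp hcomm with hr | hbl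
  · exact ⟨s, t, hst, hat, hsb, hr⟩
  · exact absurd ⟨a, s, b, t, h, hbl, hat, hsb⟩ hA1b

/-- Key contraction lemma: red `u1v0`, red `u2v1` and `u1v1 ∈ F` force `u2v0` red. -/
private lemma stmt11_lemA (hFE : ∀ u v, F u v → E u v) (hpart : Bipartition E Er Eb)
    (hA1r : NoA1 E Er) (hA1b : NoA1 E Eb) (hC : NoC E F Er) (hB1 : NoB1 E Er Eb)
    (hFb : ∀ u v, F u v → Committed E u v → Eb u v)
    {a c : U} {p q : V} (R1 : Er a p) (R2 : Er c q) (hF : F a q) : Er c p := by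
  have Eaq : E a q := hFE a q hF
  have Ecp : E c p := by
    by_contra h
    exact hC ⟨c, a, q, p, R2, R1, h, hF⟩
  obtain ⟨x, y, Exy, hay, hxp, Bxy⟩ := stmt11_red_partner hpart hA1r R1
  obtain ⟨s, t, Est, hct, hsq, Bst⟩ := stmt11_red_partner hpart hA1r R2
  by_cases hsp : E s p
  · have Exq : E x q := by
      by_contra hxq
      have hcomm : Committed E a q := ⟨x, y, Eaq, Exy, hay, hxq⟩
      exact hA1b ⟨a, x, q, y, hFb a q hF hcomm, Bxy, hay, hxq⟩
    have hnRxq : ¬ Er x q := fun hr => hC ⟨x, a, q, p, hr, R1, hxp, hF⟩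
    have hBxq : Eb x q := by
      have hcomm : Committed E x q := ⟨s, p, Exq, hsp, hxp, hsq⟩
      rcases (hpart.1 x q).mp hcomm with hr | hbl
      · exact absurd hr hnRxq
      · exact hbl
    have Ext : E x t := by
      by_contra hxt
      have Eat : E a t := by
        by_contra hat
        have hcomm : Committed E a q := ⟨s, t, Eaq, Est, hat, hsq⟩
        exact hA1b ⟨a, s, q, t, hFb a q hF hcomm, Bst, hat, hsq⟩
      have hcomm : Committed E a t := ⟨x, y, Eat, Exy, hay, hxt⟩
      rcases (hpart.1 a t).mp hcomm with hr | hbl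
      · exact hC ⟨c, a, q, t, R2, hr, hct, hF⟩
      · exact hA1b ⟨a, x, t, y, hbl, Bxy, hay, hxt⟩
    have hcommcp : Committed E c p := ⟨x, t, Ecp, Ext, hct, hxp⟩
    have hBxt : Eb x t := by
      have hcomm : Committed E x t := ⟨c, p, Ext, Ecp, hxp, hct⟩
      rcases (hpart.1 x t).mp hcomm with hr | hbl
      · exact absurd ⟨c, x, q, t, R2, hr, hBxq, hct⟩ hB1
      · exact hbl
    rcases (hpart.1 c p).mp hcommcp with hr | hbl
    · exact hr
    · exact absurd ⟨c, x, p, t, hbl, hBxt, hct, hxp⟩ hA1b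
  · have hcomm : Committed E c p := ⟨s, t, Ecp, Est, hct, hsp⟩
    rcases (hpart.1 c p).mp hcomm with hr | hbl
    · exact hr
    · exact absurd ⟨c, s, p, t, hbl, Bst, hct, hsp⟩ hA1b

/-- The union of red and uncommitted edges. -/
private def Kch (E Er : U → V → Prop) : U → V → Prop :=
  fun a b => Er a b ∨ (E a b ∧ ¬ Committed E a b)

private lemma stmt11_kch_E (hpart : Bipartition E Er Eb) {a : U} {b : V}
    (h : Kch E Er a b) : E a b :=
  h.elim (stmt11_red_E hpart) And.left

private lemma stmt11_kch_red {a : U} {b : V} (hk : Kch E Er a b) (hc : Committed E a b) :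
    Er a b :=
  hk.elim id fun h => absurd hc h.2

private lemma stmt11_not_kch (hpart : Bipartition E Er Eb) {a : U} {b : V}
    (h : ¬ Kch E Er a b) : ¬E a b ∨ Eb a b := by
  by_cases hE : E a b
  · right
    have hcomm : Committed E a b := by
      by_contra hc
      exact h (Or.inr ⟨hE, hc⟩)
    rcases (hpart.1 a b).mp hcomm with hr | hb
    · exact absurd (Or.inl hr) h
    · exact hb
  · exact Or.inl hE

private lemma stmt11_noK2_case2 (hpart : Bipartition E Er Eb) (hA1r : NoA1 E Er)
    (hA1b : NoA1 E Eb) (hB1 : NoB1 E Er Eb) {a c : U} {b d : V}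
    (hab : Kch E Er a b) (hcd : Kch E Er c d) (nEad : ¬ E a d) (Bcb : Eb c b) : False := by
  obtain ⟨s', t', Es't', hct', hs'b, Rs't'⟩ := stmt11_blue_partner hpart hA1b Bcb
  have Eab : E a b := stmt11_kch_E hpart hab
  have Ecd : E c d := stmt11_kch_E hpart hcd
  have Eat' : E a t' := by
    by_contra hat'
    exact hA1r ⟨a, s', b, t', stmt11_kch_red hab ⟨s', t', Eab, Es't', hat', hs'b⟩,
      Rs't', hat', hs'b⟩
  have Es'd : E s' d := by
    by_contra hs'd
    exact hA1r ⟨c, s', d, t', stmt11_kch_red hcd ⟨s', t', Ecd, Es't', hct', hs'd⟩,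
      Rs't', hct', hs'd⟩
  have hErab : Er a b := stmt11_kch_red hab ⟨s', d, Eab, Es'd, nEad, hs'b⟩
  have hErcd : Er c d := stmt11_kch_red hcd ⟨a, t', Ecd, Eat', hct', nEad⟩
  exact hB1 ⟨a, c, b, d, hErab, hErcd, Bcb, nEad⟩

/-- `Kch` (red ∪ uncommitted) has no induced 2K2. -/
private lemma stmt11_noK2 (hpart : Bipartition E Er Eb) (hA1r : NoA1 E Er)
    (hA1b : NoA1 E Eb) (hB1 : NoB1 E Er Eb) {a c : U} {b d : V}
    (hab : Kch E Er a b) (hcd : Kch E Er c d)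
    (had : ¬ Kch E Er a d) (hcb : ¬ Kch E Er c b) : False := by
  have Eab : E a b := stmt11_kch_E hpart hab
  have Ecd : E c d := stmt11_kch_E hpart hcd
  rcases stmt11_not_kch hpart had with nEad | Bad
  · rcases stmt11_not_kch hpart hcb with nEcb | Bcb
    · exact hA1r ⟨a, c, b, d, stmt11_kch_red hab ⟨c, d, Eab, Ecd, nEad, nEcb⟩,
        stmt11_kch_red hcd ⟨a, b, Ecd, Eab, nEcb, nEad⟩, nEad, nEcb⟩
    · exact stmt11_noK2_case2 hpart hA1r hA1b hB1 hab hcd nEad Bcb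
  · rcases stmt11_not_kch hpart hcb with nEcb | Bcb
    · exact stmt11_noK2_case2 hpart hA1r hA1b hB1 hcd hab nEcb Bad
    · obtain ⟨s, t, Est, hat, hsd, Rst⟩ := stmt11_blue_partner hpart hA1b Bad
      obtain ⟨s', t', Es't', hct', hs'b, Rs't'⟩ := stmt11_blue_partner hpart hA1b Bcb
      have Esb : E s b := by
        by_contra h
        exact hA1r ⟨a, s, b, t, stmt11_kch_red hab ⟨s, t, Eab, Est, hat, h⟩, Rst, hat, h⟩
      have Ect : E c t := by
        by_contra h
        exact hA1r ⟨c, s, d, t, stmt11_kch_red hcd ⟨s, t, Ecd, Est, h, hsd⟩, Rst, h, hsd⟩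
      have Eat' : E a t' := by
        by_contra h
        exact hA1r ⟨a, s', b, t', stmt11_kch_red hab ⟨s', t', Eab, Es't', h, hs'b⟩,
          Rs't', h, hs'b⟩
      have Es'd : E s' d := by
        by_contra h
        exact hA1r ⟨c, s', d, t', stmt11_kch_red hcd ⟨s', t', Ecd, Es't', hct', h⟩,
          Rs't', hct', h⟩
      have hc1 : Committed E s b := ⟨s', d, Esb, Es'd, hsd, hs'b⟩
      have hc2 : Committed E s' d := ⟨s, b, Es'd, Esb, hs'b, hsd⟩
      rcases (hpart.1 s b).mp hc1 with hR1 | hB1'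
      · rcases (hpart.1 s' d).mp hc2 with hR2 | hB2'
        · exact hA1r ⟨s, s', b, d, hR1, hR2, hsd, hs'b⟩
        · have hfu : ¬ Committed E c d := fun hcm =>
            hB1 ⟨s, c, b, d, hR1, stmt11_kch_red hcd hcm, Bcb, hsd⟩
          have hst' : ¬ E s t' := fun h => hfu ⟨s, t', Ecd, h, hct', hsd⟩
          exact hA1r ⟨s, s', b, t', hR1, Rs't', hst', hs'b⟩
      · rcases (hpart.1 s' d).mp hc2 with hR2 | hB2'
        · have heu : ¬ Committed E a b := fun hcm =>
            hB1 ⟨s', a, d, b, hR2, stmt11_kch_red hab hcm, Bad, hs'b⟩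
          have hs't : ¬ E s' t := fun h => heu ⟨s', t, Eab, h, hat, hs'b⟩
          exact hA1r ⟨s', s, d, t, hR2, Rst, hs't, hsd⟩
        · exact hA1b ⟨s, s', b, d, hB1', hB2', hsd, hs'b⟩

end StmtElevenAux


/-- Given an (A, B, C)-free bipartition of the committed edges, there is no
alternating cycle of the red edges relative to `G - F`. -/
theorem stmt11 {U V : Type*} (E F Er Eb : U → V → Prop) (hFE : ∀ u v, F u v → E u v)
    (hpart : Bipartition E Er Eb) (habc : ABCFree E F Er Eb)
    (hFb : ∀ u v, F u v → Committed E u v → Eb u v) :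
    ¬ AltCycle (fun u v => E u v ∧ ¬F u v) Er := by
  classical
  rintro ⟨k, hk2, u, v, -, -, hcyc⟩
  haveI : NeZero k := ⟨by omega⟩
  obtain ⟨⟨hA1r, hA1b, hC⟩, hB1, hB2⟩ := habc
  have hred : ∀ i : ZMod k, Er (u (i + 1)) (v i) := fun i => (hcyc i).2
  have hdiag : ∀ i : ZMod k, E (u i) (v i) → F (u i) (v i) := by
    intro i hE
    by_contra hF
    exact (hcyc i).1 ⟨hE, hF⟩
  -- chained reds over runs of F-diagonals
  have chain : ∀ j : ℕ, 1 ≤ j → ∀ i : ZMod k,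
      (∀ t : ℕ, 1 ≤ t → t < j → F (u (i + (t : ZMod k))) (v (i + (t : ZMod k)))) →
      Er (u (i + (j : ZMod k))) (v i) := by
    intro j
    induction j with
    | zero => omega
    | succ n ih =>
      intro _ i hFt
      rcases Nat.eq_zero_or_pos n with rfl | hn
      · have : ((1 : ℕ) : ZMod k) = 1 := Nat.cast_one
        rw [this]
        exact hred i
      · have h1 : Er (u (i + (n : ZMod k))) (v i) :=
          ih hn i (fun t ht1 ht2 => hFt t ht1 (Nat.lt_succ_of_lt ht2))
        have hFn : F (u (i + (n : ZMod k))) (v (i + (n : ZMod k))) :=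
          hFt n hn (Nat.lt_succ_self n)
        have h2 : Er (u (i + (n : ZMod k) + 1)) (v (i + (n : ZMod k))) :=
          hred (i + (n : ZMod k))
        have h3 : Er (u (i + (n : ZMod k) + 1)) (v i) :=
          stmt11_lemA hFE hpart hA1r hA1b hC hB1 hFb h1 h2 hFn
        have : ((n + 1 : ℕ) : ZMod k) = (n : ZMod k) + 1 := by push_cast; ring
        rw [this, ← add_assoc]
        exact h3
  by_cases hS : ∀ i : ZMod k, E (u i) (v i)
  · -- every diagonal is an F-edge: chain all the way around
    have hall : ∀ i : ZMod k, F (u i) (v i) := fun i => hdiag i (hS i)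
    have hk0 : Er (u ((0 : ZMod k) + (k : ZMod k))) (v (0 : ZMod k)) :=
      chain k (by omega) 0 (fun t _ _ => hall _)
    rw [ZMod.natCast_self, add_zero] at hk0
    exact stmt11_red_nF hpart hFb hk0 (hall 0)
  · push_neg at hS
    obtain ⟨i0, hi0⟩ := hS
    -- from each non-edge diagonal, jump to the next one with a chained red edge
    have hstep : ∀ i : ZMod k, ¬E (u i) (v i) →
        ∃ i' : ZMod k, ¬E (u i') (v i') ∧ Er (u i') (v i) := by
      intro i hi
      have hex : ∃ j : ℕ, 1 ≤ j ∧ ¬E (u (i + (j : ZMod k))) (v (i + (j : ZMod k))) :=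
        ⟨k, by omega, by rw [ZMod.natCast_self, add_zero]; exact hi⟩
      obtain ⟨hd1, hd2⟩ := Nat.find_spec hex
      refine ⟨i + ((Nat.find hex : ℕ) : ZMod k), hd2, ?_⟩
      apply chain (Nat.find hex) hd1 i
      intro t ht1 ht2
      have hmin := Nat.find_min hex ht2
      push_neg at hmin
      exact hdiag _ (hmin ht1)
    have hstep' : ∀ s : {i : ZMod k // ¬E (u i) (v i)},
        ∃ s' : {i : ZMod k // ¬E (u i) (v i)}, Er (u s'.1) (v s.1) := by
      rintro ⟨i, hi⟩
      obtain ⟨i', h1, h2⟩ := hstep i hi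
      exact ⟨⟨i', h1⟩, h2⟩
    choose nxt hnxt using hstep'
    set m : ℕ → {i : ZMod k // ¬E (u i) (v i)} := fun t => nxt^[t] ⟨i0, hi0⟩ with hm
    have hmsucc : ∀ t : ℕ, m (t + 1) = nxt (m t) := fun t => by
      rw [hm]
      exact Function.iterate_succ_apply' nxt t _
    have mono : ∀ (s : {i : ZMod k // ¬E (u i) (v i)}) (b : V),
        Kch E Er (u s.1) b → Kch E Er (u (nxt s).1) b := by
      intro s b hK
      by_contra hK'
      exact stmt11_noK2 hpart hA1r hA1b hB1 hK (Or.inl (hnxt s))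
        (fun hk' => s.2 (stmt11_kch_E hpart hk')) hK'
    have accum : ∀ t n : ℕ, Kch E Er (u (m (t + n + 1)).1) (v (m t).1) := by
      intro t n
      induction n with
      | zero => rw [hmsucc t]; exact Or.inl (hnxt (m t))
      | succ n ih =>
        have : t + (n + 1) + 1 = (t + n + 1) + 1 := by ring
        rw [this, hmsucc (t + n + 1)]
        exact mono (m (t + n + 1)) _ ih
    have key : ∀ t t' : ℕ, t < t' → Kch E Er (u (m t').1) (v (m t).1) := by
      intro t t' hlt
      have h := accum t (t' - t - 1)
      have he : t + (t' - t - 1) + 1 = t' := by omega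
      rwa [he] at h
    obtain ⟨t, t', hne, heq⟩ := Finite.exists_ne_map_eq_of_infinite m
    rcases hne.lt_or_gt with hlt | hlt
    · have h := key t t' hlt
      rw [← heq] at h
      exact (m t).2 (stmt11_kch_E hpart h)
    · have h := key t' t hlt
      rw [heq] at h
      exact (m t').2 (stmt11_kch_E hpart h)
end

section
/- Let G = (U, V, E) be a bipartite graph, F ⊆ E, E_c the committed edges, E_u the uncommitted edges. If E_c admits an (A, B, C)-free bipartition (E_r, E_b) with F ∩ E_c ⊆ E_b, then G has a 2-chain subgraph cover (G_1, G_2) such that G_1 has no edges in F. -/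
namespace Stmt12Aux

variable {U V : Type*} {E F Er Eb : U → V → Prop}

lemma red_E (hpart : Bipartition E Er Eb) {a : U} {w : V} (h : Er a w) : E a w := by
  obtain ⟨p, q, hc⟩ := (hpart.1 a w).mpr (Or.inl h)
  exact hc.1

lemma blue_E (hpart : Bipartition E Er Eb) {a : U} {w : V} (h : Eb a w) : E a w := by
  obtain ⟨p, q, hc⟩ := (hpart.1 a w).mpr (Or.inr h)
  exact hc.1

lemma red_not_F (hpart : Bipartition E Er Eb)
    (hFb : ∀ u v, F u v → Committed E u v → Eb u v)
    {a : U} {w : V} (h : Er a w) : ¬F a w :=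
  fun hf => hpart.2 a w ⟨h, hFb a w hf ((hpart.1 a w).mpr (Or.inl h))⟩

lemma partner (hpart : Bipartition E Er Eb) (hA1r : NoA1 E Er) {a : U} {w : V} (h : Er a w) :
    ∃ p q, Eb p q ∧ E p q ∧ ¬E a q ∧ ¬E p w := by
  obtain ⟨p, q, hE1, hE2, h3, h4⟩ := (hpart.1 a w).mpr (Or.inl h)
  refine ⟨p, q, ?_, hE2, h3, h4⟩
  have hc : Committed E p q := ⟨a, w, hE2, hE1, h4, h3⟩
  rcases (hpart.1 p q).mp hc with hr | hb
  · exact absurd ⟨a, p, w, q, h, hr, h3, h4⟩ hA1r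
  · exact hb

lemma endgameY (hpart : Bipartition E Er Eb) (habc : ABCFree E F Er Eb)
    (hFb : ∀ u v, F u v → Committed E u v → Eb u v) (hFE : ∀ u v, F u v → E u v)
    {a b : U} {v v' : V}
    (h1 : Er a v) (h2 : Er b v') (hg : F b v) (hX : E a v') (hXr : ¬Er a v') : False := by
  obtain ⟨⟨hA1r, hA1b, hC⟩, hB1, hB2⟩ := habc
  have hgE : E b v := hFE _ _ hg
  obtain ⟨p, q, hPb, hpq, h3, h4⟩ := partner hpart hA1r h1
  obtain ⟨p', q', hPb', hpq', h5, h6⟩ := partner hpart hA1r h2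
  have F1 : E b q := by
    by_contra hbq
    exact hA1b ⟨b, p, v, q, hFb _ _ hg ⟨p, q, hgE, hpq, hbq, h4⟩, hPb, hbq, h4⟩
  have F2 : E p' v := by
    by_contra hc
    exact hA1b ⟨b, p', v, q', hFb _ _ hg ⟨p', q', hgE, hpq', h5, hc⟩, hPb', h5, hc⟩
  have F3 : E p' q := by
    by_contra hc
    have hcom : Committed E p' v := ⟨p, q, F2, hpq, hc, h4⟩
    rcases (hpart.1 _ _).mp hcom with hr | hb
    · exact hC ⟨p', b, v, v', hr, h2, h6, hg⟩
    · exact hA1b ⟨p', p, v, q, hb, hPb, hc, h4⟩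
  have hEbX : Eb a v' := ((hpart.1 _ _).mp ⟨p', q, hX, F3, h3, h6⟩).resolve_left hXr
  have F4 : Er p' q := by
    rcases (hpart.1 _ _).mp (⟨a, v', F3, hX, h6, h3⟩ : Committed E p' q) with hr | hb
    · exact hr
    · exact absurd ⟨a, p', v', q, hEbX, hb, h3, h6⟩ hA1b
  have F5 : E p q' := by
    by_contra hc
    exact hB2 ⟨p, p', q, q', hPb, hPb', F4, hc⟩
  have F6 : Er p q' := by
    have hEbg : Eb b v := hFb _ _ hg ⟨p, q', hgE, F5, h5, h4⟩
    rcases (hpart.1 _ _).mp (⟨b, v, F5, hgE, h4, h5⟩ : Committed E p q') with hr | hb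
    · exact hr
    · exact absurd ⟨p, b, q', v, hb, hEbg, h4, h5⟩ hA1b
  have F7 : E a q' := by
    by_contra hc
    exact hA1r ⟨p, a, q', v, F6, h1, h4, hc⟩
  rcases (hpart.1 _ _).mp (⟨b, q, F7, F1, h3, h5⟩ : Committed E a q') with hr | hb
  · exact hB1 ⟨a, p', q', q, hr, F4, hPb', h3⟩
  · have hrbq : Er b q := by
      rcases (hpart.1 _ _).mp (⟨a, q', F1, F7, h5, h3⟩ : Committed E b q) with hr9 | hb9
      · exact hr9
      · exact absurd ⟨a, b, q', q, hb, hb9, h3, h5⟩ hA1b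
    exact hB1 ⟨b, p, q, q', hrbq, F6, hPb, h5⟩


lemma noWalk1 (hpart : Bipartition E Er Eb) (habc : ABCFree E F Er Eb)
    (hFb : ∀ u v, F u v → Committed E u v → Eb u v) (hFE : ∀ u v, F u v → E u v) :
    ∀ k : ℕ, 1 ≤ k → ∀ (x : ZMod k → U) (v : ZMod k → V),
      (∀ i, Er (x i) (v i)) →
      (∀ i, ¬E (x (i + 1)) (v i) ∨ F (x (i + 1)) (v i)) → False := by
  intro k
  induction k using Nat.strong_induction_on with
  | _ k IH =>
  intro hk x v hER hN
  obtain ⟨⟨hA1r, hA1b, hC⟩, hB1, hB2⟩ := habc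
  haveI : NeZero k := ⟨by omega⟩
  -- the case k = 1
  rcases eq_or_lt_of_le hk with hk1 | hk2
  · have hk1' : k = 1 := hk1.symm
    subst hk1'
    have h01 : (0 : ZMod 1) + 1 = 0 := by decide
    rcases hN 0 with h | h
    · rw [h01] at h; exact h (red_E hpart (hER 0))
    · rw [h01] at h; exact red_not_F hpart hFb (hER 0) h
  -- shorter-walk builder
  have step : ∀ (m : ℕ) (c : ZMod k) (w : V), 1 ≤ m → m < k →
      Er (x (c + ((m - 1 : ℕ) : ZMod k))) w →
      (¬E (x c) w ∨ F (x c) w) → False := by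
    intro m c w hm hmk hw hNw
    haveI : NeZero m := ⟨by omega⟩
    refine IH m hmk hm (fun t => x (c + (t.val : ZMod k)))
      (fun t => if t.val = m - 1 then w else v (c + (t.val : ZMod k))) ?_ ?_
    · intro t
      by_cases ht : t.val = m - 1
      · rw [if_pos ht, ht]; exact hw
      · rw [if_neg ht]; exact hER _
    · intro t
      have h0 : ((t.val : ℕ) : ZMod m) = t := ZMod.natCast_rightInverse t
      have hval : (t + 1).val = (t.val + 1) % m := by
        conv_lhs => rw [← h0]
        rw [show ((t.val : ℕ) : ZMod m) + 1 = ((t.val + 1 : ℕ) : ZMod m) by push_cast; ring]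
        exact ZMod.val_natCast _ _
      by_cases ht : t.val = m - 1
      · rw [if_pos ht]
        have hv0 : (t + 1).val = 0 := by
          rw [hval, ht, Nat.sub_add_cancel hm, Nat.mod_self]
        rw [hv0]
        simpa using hNw
      · rw [if_neg ht]
        have hlt : t.val + 1 < m := by
          have := ZMod.val_lt t; omega
        have hv1 : (t + 1).val = t.val + 1 := by rw [hval, Nat.mod_eq_of_lt hlt]
        rw [hv1]
        have hcast : (((t.val + 1 : ℕ)) : ZMod k) = (t.val : ZMod k) + 1 := by push_cast; ring
        rw [hcast, ← add_assoc]
        exact hN (c + (t.val : ZMod k))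
  by_cases hFs : ∃ s, F (x (s + 1)) (v s)
  · obtain ⟨s, hg⟩ := hFs
    by_cases hE : E (x s) (v (s + 1))
    · by_cases hEr : Er (x s) (v (s + 1))
      · have hNs : ¬E (x (s + 2)) (v (s + 1)) ∨ F (x (s + 2)) (v (s + 1)) := by
          have := hN (s + 1); rwa [show s + 1 + 1 = s + 2 by ring] at this
        refine step (k - 1) (s + 2) (v (s + 1)) (by omega) (by omega) ?_ hNs
        have hc2 : ((k - 1 - 1 : ℕ) : ZMod k) = -2 := by
          rw [show (k - 1 - 1 : ℕ) = k - 2 by omega, Nat.cast_sub (by omega : 2 ≤ k),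
            ZMod.natCast_self]
          ring
        rw [hc2]
        have : s + 2 + (-2 : ZMod k) = s := by ring
        rw [this]
        exact hEr
      · exact endgameY hpart ⟨⟨hA1r, hA1b, hC⟩, hB1, hB2⟩ hFb hFE (hER s) (hER (s + 1)) hg hE hEr
    · exact hC ⟨x s, x (s + 1), v s, v (s + 1), hER s, hER (s + 1), hE, hg⟩
  · push_neg at hFs
    have hNE : ∀ i, ¬E (x (i + 1)) (v i) := fun i => (hN i).resolve_right (hFs i)
    rcases eq_or_lt_of_le (show 2 ≤ k from hk2) with hk2' | hk3
    · -- k = 2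
      have hk2'' : k = 2 := by omega
      subst hk2''
      refine hA1r ⟨x 0, x 1, v 0, v 1, hER 0, hER 1, ?_, ?_⟩
      · have := hNE 1; rw [show (1 + 1 : ZMod 2) = 0 by decide] at this; exact this
      · have := hNE 0; rw [show (0 + 1 : ZMod 2) = 1 by decide] at this; exact this
    · -- 3 ≤ k
      have hsat : ∀ j : ℕ, 1 ≤ j → j ≤ k - 2 → ∀ i : ZMod k,
          E (x i) (v (i + (j : ℕ))) ∧ ¬Er (x i) (v (i + (j : ℕ))) := by
        intro j hj1 hj2 i
        constructor
        · by_contra hc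
          refine step (j + 1) i (v (i + (j : ℕ))) (by omega) (by omega) ?_ (Or.inl hc)
          rw [show (j + 1 - 1 : ℕ) = j by omega]
          exact hER (i + (j : ℕ))
        · intro hEr
          refine step (k - j) (i + (j : ℕ) + 1) (v (i + (j : ℕ))) (by omega) (by omega) ?_
            (hN (i + (j : ℕ)))
          have hc3 : ((k - j - 1 : ℕ) : ZMod k) = -((j : ZMod k) + 1) := by
            rw [show (k - j - 1 : ℕ) = k - (j + 1) by omega,
              Nat.cast_sub (by omega : j + 1 ≤ k)]
            push_cast [ZMod.natCast_self]
            ring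
          rw [hc3]
          have : i + (j : ZMod k) + 1 + -((j : ZMod k) + 1) = i := by ring
          rw [this]
          exact hEr
      rcases eq_or_lt_of_le (show 3 ≤ k from hk3) with hk3' | hk4
      · -- k = 3
        have hk3'' : k = 3 := by omega
        subst hk3''
        have hQ := hsat 1 le_rfl (by norm_num)
        have hone : ((1 : ℕ) : ZMod 3) = 1 := by decide
        have hEbX : ∀ i : ZMod 3, Eb (x i) (v (i + 1)) := by
          intro i
          have hq := hQ i
          rw [hone] at hq
          have hne1 : ¬E (x i) (v (i + 2)) := by
            have := hNE (i + 2)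
            rwa [show i + 2 + 1 = i by ring_nf; rw [show (3 : ZMod 3) = 0 by decide]; ring] at this
          have hne2 : ¬E (x (i + 2)) (v (i + 1)) := by
            have := hNE (i + 1)
            rwa [show i + 1 + 1 = i + 2 by ring] at this
          have hcom : Committed E (x i) (v (i + 1)) :=
            ⟨x (i + 2), v (i + 2), hq.1, red_E hpart (hER (i + 2)), hne1, hne2⟩
          exact ((hpart.1 _ _).mp hcom).resolve_left hq.2
        refine hB2 ⟨x 0, x 1, v 1, v 2, ?_, ?_, hER 1, ?_⟩
        · have := hEbX 0; rwa [show (0 + 1 : ZMod 3) = 1 by decide] at this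
        · have := hEbX 1; rwa [show (1 + 1 : ZMod 3) = 2 by decide] at this
        · have := hNE 2; rwa [show (2 + 1 : ZMod 3) = 0 by decide] at this
      · -- 4 ≤ k
        have hQ1 := hsat 1 le_rfl (by omega) 1
        have hQ2 := hsat (k - 3) (by omega) (by omega) 3
        rw [show ((1 : ℕ) : ZMod k) = 1 by push_cast; ring, show (1 + 1 : ZMod k) = 2 by ring]
          at hQ1
        rw [show (3 : ZMod k) + ((k - 3 : ℕ) : ZMod k) = 0 by
          rw [Nat.cast_sub (by omega : 3 ≤ k), ZMod.natCast_self]; ring] at hQ2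
        have hne1 : ¬E (x 1) (v 0) := by
          have := hNE 0; rwa [zero_add] at this
        have hne2 : ¬E (x 3) (v 2) := by
          have := hNE 2; rwa [show (2 + 1 : ZMod k) = 3 by ring] at this
        have hconf : Confl E (x 1) (v 2) (x 3) (v 0) := ⟨hQ1.1, hQ2.1, hne1, hne2⟩
        have hEb1 : Eb (x 1) (v 2) :=
          ((hpart.1 _ _).mp ⟨x 3, v 0, hconf⟩).resolve_left hQ1.2
        have hEb2 : Eb (x 3) (v 0) :=
          ((hpart.1 _ _).mp ⟨x 1, v 2, hQ2.1, hQ1.1, hne2, hne1⟩).resolve_left hQ2.2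
        exact hA1b ⟨x 1, x 3, v 2, v 0, hEb1, hEb2, hne1, hne2⟩

lemma noWalk2 (hpart : Bipartition E Er Eb) (habc : ABCFree E F Er Eb) :
    ∀ k : ℕ, 1 ≤ k → ∀ (x : ZMod k → U) (v : ZMod k → V),
      (∀ i, E (x i) (v i) ∧ ¬Er (x i) (v i)) →
      (∀ i, ¬E (x (i + 1)) (v i)) → False := by
  intro k
  induction k using Nat.strong_induction_on with
  | _ k IH =>
  intro hk x v hM hNE
  obtain ⟨⟨hA1r, hA1b, hC⟩, hB1, hB2⟩ := habc
  haveI : NeZero k := ⟨by omega⟩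
  rcases eq_or_lt_of_le hk with hk1 | hk2
  · have hk1' : k = 1 := hk1.symm
    subst hk1'
    have := hNE 0
    rw [show (0 : ZMod 1) + 1 = 0 by decide] at this
    exact this (hM 0).1
  have step : ∀ (m : ℕ) (c : ZMod k) (w : V), 1 ≤ m → m < k →
      E (x (c + ((m - 1 : ℕ) : ZMod k))) w → ¬Er (x (c + ((m - 1 : ℕ) : ZMod k))) w →
      ¬E (x c) w → False := by
    intro m c w hm hmk hw1 hw2 hNw
    haveI : NeZero m := ⟨by omega⟩
    refine IH m hmk hm (fun t => x (c + (t.val : ZMod k)))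
      (fun t => if t.val = m - 1 then w else v (c + (t.val : ZMod k))) ?_ ?_
    · intro t
      by_cases ht : t.val = m - 1
      · rw [if_pos ht, ht]; exact ⟨hw1, hw2⟩
      · rw [if_neg ht]; exact hM _
    · intro t
      have h0 : ((t.val : ℕ) : ZMod m) = t := ZMod.natCast_rightInverse t
      have hval : (t + 1).val = (t.val + 1) % m := by
        conv_lhs => rw [← h0]
        rw [show ((t.val : ℕ) : ZMod m) + 1 = ((t.val + 1 : ℕ) : ZMod m) by push_cast; ring]
        exact ZMod.val_natCast _ _
      by_cases ht : t.val = m - 1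
      · rw [if_pos ht]
        have hv0 : (t + 1).val = 0 := by
          rw [hval, ht, Nat.sub_add_cancel hm, Nat.mod_self]
        rw [hv0]
        simpa using hNw
      · rw [if_neg ht]
        have hlt : t.val + 1 < m := by
          have := ZMod.val_lt t; omega
        have hv1 : (t + 1).val = t.val + 1 := by rw [hval, Nat.mod_eq_of_lt hlt]
        rw [hv1]
        have hcast : (((t.val + 1 : ℕ)) : ZMod k) = (t.val : ZMod k) + 1 := by push_cast; ring
        rw [hcast, ← add_assoc]
        exact hNE (c + (t.val : ZMod k))
  rcases eq_or_lt_of_le (show 2 ≤ k from hk2) with hk2' | hk3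
  · have hk2'' : k = 2 := by omega
    subst hk2''
    have hne1 : ¬E (x 0) (v 1) := by
      have := hNE 1; rwa [show (1 + 1 : ZMod 2) = 0 by decide] at this
    have hne0 : ¬E (x 1) (v 0) := by
      have := hNE 0; rwa [show (0 + 1 : ZMod 2) = 1 by decide] at this
    have hc0 : Committed E (x 0) (v 0) := ⟨x 1, v 1, (hM 0).1, (hM 1).1, hne1, hne0⟩
    have hc1 : Committed E (x 1) (v 1) := ⟨x 0, v 0, (hM 1).1, (hM 0).1, hne0, hne1⟩
    have hEb0 : Eb (x 0) (v 0) := ((hpart.1 _ _).mp hc0).resolve_left (hM 0).2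
    have hEb1 : Eb (x 1) (v 1) := ((hpart.1 _ _).mp hc1).resolve_left (hM 1).2
    exact hA1b ⟨x 0, x 1, v 0, v 1, hEb0, hEb1, hne1, hne0⟩
  -- 3 ≤ k
  have hsat : ∀ j : ℕ, 1 ≤ j → j ≤ k - 2 → ∀ i : ZMod k,
      Er (x i) (v (i + (j : ℕ))) := by
    intro j hj1 hj2 i
    by_cases hE : E (x i) (v (i + (j : ℕ)))
    · by_contra hEr
      have hc3 : ((k - j - 1 : ℕ) : ZMod k) = -((j : ZMod k) + 1) := by
        rw [show (k - j - 1 : ℕ) = k - (j + 1) by omega,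
          Nat.cast_sub (by omega : j + 1 ≤ k)]
        push_cast [ZMod.natCast_self]
        ring
      have hidx : i + (j : ZMod k) + 1 + ((k - j - 1 : ℕ) : ZMod k) = i := by
        rw [hc3]; ring
      refine step (k - j) (i + (j : ℕ) + 1) (v (i + (j : ℕ))) (by omega) (by omega) ?_ ?_
        (hNE (i + (j : ℕ)))
      · rw [hidx]; exact hE
      · rw [hidx]; exact hEr
    · exfalso
      have hidx : i + ((j + 1 - 1 : ℕ) : ZMod k) = i + ((j : ℕ) : ZMod k) := by
        rw [show (j + 1 - 1 : ℕ) = j by omega]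
      refine step (j + 1) i (v (i + (j : ℕ))) (by omega) (by omega) ?_ ?_ hE
      · rw [hidx]; exact (hM (i + (j : ℕ))).1
      · rw [hidx]; exact (hM (i + (j : ℕ))).2
  rcases eq_or_lt_of_le (show 3 ≤ k from hk3) with hk3' | hk4
  · have hk3'' : k = 3 := by omega
    subst hk3''
    have hone : ((1 : ℕ) : ZMod 3) = 1 := by decide
    have hsat1 : ∀ i : ZMod 3, Er (x i) (v (i + 1)) := by
      intro i; have := hsat 1 le_rfl (by norm_num) i; rwa [hone] at this
    have hEbd : ∀ i : ZMod 3, Eb (x i) (v i) := by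
      intro i
      have hr1 : Er (x (i + 1)) (v (i + 2)) := by
        have := hsat1 (i + 1); rwa [show i + 1 + 1 = i + 2 by ring] at this
      have hne1 : ¬E (x i) (v (i + 2)) := by
        have := hNE (i + 2)
        rwa [show i + 2 + 1 = i by
          rw [add_assoc, show (2 : ZMod 3) + 1 = 0 by decide, add_zero]] at this
      have hcom : Committed E (x i) (v i) :=
        ⟨x (i + 1), v (i + 2), (hM i).1, red_E hpart hr1, hne1, hNE i⟩
      exact ((hpart.1 _ _).mp hcom).resolve_left (hM i).2
    refine hB2 ⟨x 1, x 0, v 1, v 0, hEbd 1, hEbd 0, ?_, ?_⟩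
    · have := hsat1 0; rwa [zero_add] at this
    · have := hNE 0; rwa [zero_add] at this
  -- 4 ≤ k
  have hQ1 : Er (x 1) (v 2) := by
    have := hsat 1 le_rfl (by omega) 1
    rwa [show ((1 : ℕ) : ZMod k) = 1 by push_cast; ring, show (1 + 1 : ZMod k) = 2 by ring]
      at this
  have hQ2 : Er (x 3) (v 0) := by
    have := hsat (k - 3) (by omega) (by omega) 3
    rwa [show (3 : ZMod k) + ((k - 3 : ℕ) : ZMod k) = 0 by
      rw [Nat.cast_sub (by omega : 3 ≤ k), ZMod.natCast_self]; ring] at this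
  have hne1 : ¬E (x 1) (v 0) := by
    have := hNE 0; rwa [zero_add] at this
  have hne2 : ¬E (x 3) (v 2) := by
    have := hNE 2; rwa [show (2 + 1 : ZMod k) = 3 by ring] at this
  exact hA1r ⟨x 1, x 3, v 2, v 0, hQ1, hQ2, hne1, hne2⟩

def StepRel {U V : Type*} (M E' : U → V → Prop) (a b : U) : Prop := ∃ w, M a w ∧ ¬E' b w

lemma path_of_transGen {S : U → U → Prop} :
    ∀ {a b : U}, Relation.TransGen S a b →
      ∃ (n : ℕ) (f : ℕ → U), 1 ≤ n ∧ f 0 = a ∧ f n = b ∧ ∀ i < n, S (f i) (f (i + 1)) := by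
  intro a b h
  induction h with
  | single h =>
    rename_i c
    exact ⟨1, fun i => if i = 0 then a else c, le_rfl, by simp, by simp, by
      intro i hi
      have : i = 0 := by omega
      subst this
      simpa using h⟩
  | tail hab hlast ih =>
    rename_i b' c
    obtain ⟨n, f, hn, h0, hnb, hstep⟩ := ih
    refine ⟨n + 1, fun i => if i ≤ n then f i else c, by omega, by simp [h0], by simp, ?_⟩
    intro i hi
    rcases Nat.lt_or_ge i n with h | h
    · have e1 : i ≤ n := by omega
      have e2 : i + 1 ≤ n := by omega
      simp only [if_pos e1, if_pos e2]
      exact hstep i h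
    · have : i = n := by omega
      subst this
      simp only [if_pos le_rfl, if_neg (by omega : ¬ i + 1 ≤ i)]
      rw [hnb]
      exact hlast
    
lemma closedWalk_of_transGen {S : U → U → Prop} {a : U} (h : Relation.TransGen S a a) :
    ∃ (n : ℕ), 1 ≤ n ∧ ∃ x : ZMod n → U, ∀ t, S (x t) (x (t + 1)) := by
  obtain ⟨n, f, hn, h0, hnn, hstep⟩ := path_of_transGen (S := S) h
  haveI : NeZero n := ⟨by omega⟩
  refine ⟨n, hn, fun t => f t.val, ?_⟩
  intro t
  have hvlt := ZMod.val_lt t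
  have h0' : ((t.val : ℕ) : ZMod n) = t := ZMod.natCast_rightInverse t
  have hval : (t + 1).val = (t.val + 1) % n := by
    conv_lhs => rw [← h0']
    rw [show ((t.val : ℕ) : ZMod n) + 1 = ((t.val + 1 : ℕ) : ZMod n) by push_cast; ring]
    exact ZMod.val_natCast _ _
  have hS := hstep t.val hvlt
  dsimp only
  rcases Nat.lt_or_ge (t.val + 1) n with hlt | hge
  · rw [hval, Nat.mod_eq_of_lt hlt]
    exact hS
  · have heq : t.val + 1 = n := by omega
    rw [hval, heq, Nat.mod_self]
    rw [← heq] at hnn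
    rw [h0]
    rw [hnn] at hS
    exact hS

noncomputable def rnk [Fintype U] (S : U → U → Prop) (a : U) : ℕ :=
  {b | Relation.TransGen S a b}.ncard

lemma rnk_lt [Fintype U] {S : U → U → Prop} (hirr : ∀ c, ¬Relation.TransGen S c c)
    {a b : U} (hab : S a b) : rnk S b < rnk S a := by
  apply Set.ncard_lt_ncard _ (Set.toFinite _)
  constructor
  · intro c hc
    exact Relation.TransGen.head hab hc
  · intro hsup
    exact hirr b (hsup (Relation.TransGen.single hab))

lemma chain_extend [Fintype U] (M E' : U → V → Prop)
    (hirr : ∀ a, ¬Relation.TransGen (StepRel M E') a a) :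
    ∃ E1 : U → V → Prop, (∀ u v, M u v → E1 u v) ∧ (∀ u v, E1 u v → E' u v) ∧
      NoInduced2K2 E1 := by
  refine ⟨fun u v => ∃ w, M w v ∧ rnk (StepRel M E') w ≤ rnk (StepRel M E') u,
    fun u v h => ⟨u, h, le_rfl⟩, ?_, ?_⟩
  · rintro u v ⟨w, hM, hr⟩
    by_contra hE'
    exact absurd hr (not_le.mpr (rnk_lt hirr ⟨v, hM, hE'⟩))
  · rintro ⟨u1, u2, v1, v2, ⟨w1, hM1, hr1⟩, ⟨w2, hM2, hr2⟩, hn12, hn21⟩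
    rcases le_total (rnk (StepRel M E') u1) (rnk (StepRel M E') u2) with h | h
    · exact hn21 ⟨w1, hM1, hr1.trans h⟩
    · exact hn12 ⟨w2, hM2, hr2.trans h⟩

end Stmt12Aux

/-- If the committed edges of a finite bipartite graph admit an (A, B, C)-free
bipartition with all committed `F`-edges blue, then `G` has a 2-chain subgraph
cover whose first subgraph avoids `F`. -/
theorem stmt12 {U V : Type*} [Fintype U] [Fintype V] (E F Er Eb : U → V → Prop)
    (hFE : ∀ u v, F u v → E u v)
    (hpart : Bipartition E Er Eb) (habc : ABCFree E F Er Eb)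
    (hFb : ∀ u v, F u v → Committed E u v → Eb u v) :
    ∃ E1 E2 : U → V → Prop, ChainCover E E1 E2 ∧ ∀ u v, ¬(E1 u v ∧ F u v) := by
  classical
  have hirr1 : ∀ a, ¬Relation.TransGen
      (Stmt12Aux.StepRel Er (fun u v => E u v ∧ ¬F u v)) a a := by
    intro a h
    obtain ⟨n, hn, x, hS⟩ := Stmt12Aux.closedWalk_of_transGen h
    choose v hv1 hv2 using hS
    refine Stmt12Aux.noWalk1 hpart habc hFb hFE n hn x v hv1 ?_
    intro i
    by_cases hE : E (x (i + 1)) (v i)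
    · exact Or.inr (by_contra fun hF => hv2 i ⟨hE, hF⟩)
    · exact Or.inl hE
  have hirr2 : ∀ a, ¬Relation.TransGen
      (Stmt12Aux.StepRel (fun u v => E u v ∧ ¬Er u v) E) a a := by
    intro a h
    obtain ⟨n, hn, x, hS⟩ := Stmt12Aux.closedWalk_of_transGen h
    choose v hv1 hv2 using hS
    exact Stmt12Aux.noWalk2 hpart habc n hn x v hv1 hv2
  obtain ⟨E1, hM1, hsub1, hchain1⟩ :=
    Stmt12Aux.chain_extend Er (fun u v => E u v ∧ ¬F u v) hirr1
  obtain ⟨E2, hM2, hsub2, hchain2⟩ :=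
    Stmt12Aux.chain_extend (fun u v => E u v ∧ ¬Er u v) E hirr2
  refine ⟨E1, E2, ⟨fun u v h => (hsub1 u v h).1, fun u v h => hsub2 u v h, ?_, hchain1,
    hchain2⟩, fun u v h => (hsub1 u v h.1).2 h.2⟩
  intro u v
  constructor
  · intro hE
    by_cases hr : Er u v
    · exact Or.inl (hM1 u v hr)
    · exact Or.inr (hM2 u v ⟨hE, hr⟩)
  · rintro (h | h)
    · exact (hsub1 u v h).1
    · exact hsub2 u v h
end

section
/- Let (E_r, E_b) be an (A, C)-free bipartition of the committed edges E_c of a bipartite graph G = (U, V, E) with F ∩ E_c ⊆ E_b, and let uv ∈ E̅ be a non-edge of G. Define H_r = {u'v' ∈ E_r : uv', u'v ∈ E_b}, H_b = {u'v' ∈ E_b : uv', u'v ∈ E_r}, and H = H_r ∪ H_b. Then F ∩ H = ∅. -/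
/-- For a non-edge `uv`, the swap set `H = H_r ∪ H_b` contains no edge of `F`. -/
theorem stmt14 {U V : Type*} (E F Er Eb : U → V → Prop) (hFE : ∀ u v, F u v → E u v)
    (hpart : Bipartition E Er Eb) (hac : ACFree E F Er Eb)
    (hFb : ∀ u v, F u v → Committed E u v → Eb u v)
    (u : U) (v : V) (huv : ¬E u v) :
    ∀ (u' : U) (v' : V),
      ((Er u' v' ∧ Eb u v' ∧ Eb u' v) ∨ (Eb u' v' ∧ Er u v' ∧ Er u' v)) →
      ¬F u' v' := by
  rintro u' v' (⟨hr, _, _⟩ | ⟨hb, hrv', hrv⟩) hF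
  · exact hpart.2 u' v' ⟨hr, hFb u' v' hF ((hpart.1 u' v').mpr (Or.inl hr))⟩
  · exact hac.2.2 ⟨u, u', v', v, hrv', hrv, huv, hF⟩
end

section
/- Let (E_r, E_b) be an (A, C)-free bipartition of the committed edges E_c of a bipartite graph G = (U, V, E), uv a non-edge of G, H_r = {u'v' ∈ E_r : uv', u'v ∈ E_b}, H_b = {u'v' ∈ E_b : uv', u'v ∈ E_r}, H = H_r ∪ H_b, and define E_r' = (E_r \ H_r) ∪ H_b and E_b' = (E_b \ H_b) ∪ H_r. Then the new bipartition (E_r', E_b') of E_c contains no configuration (A_1) with at least one edge in H: there are no u_1, u_2 ∈ U, v_1, v_2 ∈ V with u_1v_1, u_2v_2 ∈ E_r', u_1v_2, u_2v_1 ∉ E, and {u_1v_1, u_2v_2} ∩ H ≠ ∅. -/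
/-- After swapping along a non-edge `uv`, the new bipartition contains no
configuration (A1) with at least one edge in `H`. -/
theorem stmt15 {U V : Type*} (E F Er Eb : U → V → Prop) (hFE : ∀ u v, F u v → E u v)
    (hpart : Bipartition E Er Eb) (hac : ACFree E F Er Eb)
    (hFb : ∀ u v, F u v → Committed E u v → Eb u v)
    (u : U) (v : V) (huv : ¬E u v)
    (Hr Hb H Er' : U → V → Prop)
    (hHr : ∀ a b, Hr a b ↔ Er a b ∧ Eb u b ∧ Eb a v)
    (hHb : ∀ a b, Hb a b ↔ Eb a b ∧ Er u b ∧ Er a v)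
    (hH : ∀ a b, H a b ↔ Hr a b ∨ Hb a b)
    (hEr' : ∀ a b, Er' a b ↔ (Er a b ∧ ¬Hr a b) ∨ Hb a b) :
    ¬ ∃ (u1 u2 : U) (v1 v2 : V), Er' u1 v1 ∧ Er' u2 v2 ∧ ¬E u1 v2 ∧ ¬E u2 v1 ∧
      (H u1 v1 ∨ H u2 v2) := by
  obtain ⟨hpc, hpd⟩ := hpart
  obtain ⟨hA1r, hA1b, _⟩ := hac
  have hErE : ∀ a b, Er a b → E a b := fun a b h => by
    obtain ⟨_, _, hE, _⟩ := (hpc a b).mpr (Or.inl h); exact hE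
  have hEbE : ∀ a b, Eb a b → E a b := fun a b h => by
    obtain ⟨_, _, hE, _⟩ := (hpc a b).mpr (Or.inr h); exact hE
  -- core case: first edge is an Hb edge
  have core : ∀ u1 u2 v1 v2, Hb u1 v1 → Er' u2 v2 → ¬E u1 v2 → ¬E u2 v1 → False := by
    intro u1 u2 v1 v2 hb1 h2' hn12 hn21
    obtain ⟨heb1, heuv1, he1v⟩ := (hHb u1 v1).mp hb1
    rcases (hEr' u2 v2).mp h2' with ⟨her2, hnhr2⟩ | hb2
    · -- u2v2 ∈ Er, ¬Hr u2v2
      have hE2v : E u2 v := by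
        by_contra h
        exact hA1r ⟨u1, u2, v, v2, he1v, her2, hn12, h⟩
      have hEuv2 : E u v2 := by
        by_contra h
        exact hA1r ⟨u, u2, v1, v2, heuv1, her2, h, hn21⟩
      have hc2v : Committed E u2 v := ⟨u, v1, hE2v, hErE _ _ heuv1, hn21, huv⟩
      have hcuv2 : Committed E u v2 := ⟨u1, v, hEuv2, hErE _ _ he1v, huv, hn12⟩
      have heb2v : Eb u2 v := by
        rcases (hpc u2 v).mp hc2v with h | h
        · exact absurd ⟨u2, u, v, v1, h, heuv1, hn21, huv⟩ hA1r
        · exact h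
      have hebuv2 : Eb u v2 := by
        rcases (hpc u v2).mp hcuv2 with h | h
        · exact absurd ⟨u, u1, v2, v, h, he1v, huv, hn12⟩ hA1r
        · exact h
      exact hnhr2 ((hHr u2 v2).mpr ⟨her2, hebuv2, heb2v⟩)
    · -- u2v2 ∈ Hb : both in Eb, conflict, contradiction with NoA1 Eb
      obtain ⟨heb2, _, _⟩ := (hHb u2 v2).mp hb2
      exact hA1b ⟨u1, u2, v1, v2, heb1, heb2, hn12, hn21⟩
  rintro ⟨u1, u2, v1, v2, h1', h2', hn12, hn21, hmem⟩
  have getHb : ∀ a b, Er' a b → H a b → Hb a b := by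
    intro a b h' hh
    rcases (hH a b).mp hh with hr | hb
    · rcases (hEr' a b).mp h' with ⟨_, hn⟩ | hb
      · exact absurd hr hn
      · exact hb
    · exact hb
  rcases hmem with hh | hh
  · exact core u1 u2 v1 v2 (getHb _ _ h1' hh) h2' hn12 hn21
  · exact core u2 u1 v2 v1 (getHb _ _ h2' hh) h1' hn21 hn12
end

section
/- Given a bipartite graph G = (U, V, E), F ⊆ E, and the 2CNF formula φ with a variable x_e for each committed edge e ∈ E_c, clause (x_e) for each e ∈ F ∩ E_c, clauses (x_e ∨ x_{e'}) and (¬x_e ∨ ¬x_{e'}) for each pair of conflicting committed edges e, e', and clause (x_e ∨ x_{e'}) whenever edges e = u_1v_1, e' = u_2v_2 ∈ E_c satisfy u_1v_2 ∉ E and u_2v_1 ∈ F: a truth assignment τ satisfies φ if and only if the bipartition of E_c defined by E_r = {e : τ(x_e) = 0}, E_b = {e : τ(x_e) = 1} is (A, C)-free and satisfies F ∩ E_c ⊆ E_b. -/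
/-- A truth assignment satisfies the 2CNF formula `φ` iff the corresponding
bipartition of the committed edges is (A, C)-free with all committed
`F`-edges blue. -/
theorem stmt16 {U V : Type*} (E F : U → V → Prop) (hFE : ∀ u v, F u v → E u v)
    (τ : U → V → Bool) :
    ((∀ u v, F u v → Committed E u v → τ u v = true) ∧
     (∀ (u1 : U) (v1 : V) (u2 : U) (v2 : V),
        Committed E u1 v1 → Committed E u2 v2 → Confl E u1 v1 u2 v2 →
        (τ u1 v1 = true ∨ τ u2 v2 = true) ∧ ¬(τ u1 v1 = true ∧ τ u2 v2 = true)) ∧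
     (∀ (u1 : U) (v1 : V) (u2 : U) (v2 : V),
        Committed E u1 v1 → Committed E u2 v2 → ¬E u1 v2 → F u2 v1 →
        (τ u1 v1 = true ∨ τ u2 v2 = true)))
    ↔ (ACFree E F (fun u v => Committed E u v ∧ τ u v = false)
                  (fun u v => Committed E u v ∧ τ u v = true) ∧
       ∀ u v, F u v → Committed E u v → τ u v = true) := by
  have hCE : ∀ u v, Committed E u v → E u v := by
    rintro u v ⟨u', v', h, _⟩; exact h
  constructor
  · rintro ⟨h1, h2, h3⟩
    refine ⟨⟨?_, ?_, ?_⟩, h1⟩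
    · rintro ⟨u1, u2, v1, v2, ⟨hc1, ht1⟩, ⟨hc2, ht2⟩, hn1, hn2⟩
      rcases (h2 u1 v1 u2 v2 hc1 hc2 ⟨hCE _ _ hc1, hCE _ _ hc2, hn1, hn2⟩).1 with h | h
      · simp [h] at ht1
      · simp [h] at ht2
    · rintro ⟨u1, u2, v1, v2, ⟨hc1, ht1⟩, ⟨hc2, ht2⟩, hn1, hn2⟩
      exact (h2 u1 v1 u2 v2 hc1 hc2 ⟨hCE _ _ hc1, hCE _ _ hc2, hn1, hn2⟩).2 ⟨ht1, ht2⟩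
    · rintro ⟨u1, u2, v1, v2, ⟨hc1, ht1⟩, ⟨hc2, ht2⟩, hn1, hF⟩
      rcases h3 u1 v1 u2 v2 hc1 hc2 hn1 hF with h | h
      · simp [h] at ht1
      · simp [h] at ht2
  · rintro ⟨⟨hA1, hA2, hC⟩, hF⟩
    refine ⟨hF, ?_, ?_⟩
    · intro u1 v1 u2 v2 hc1 hc2 ⟨_, _, hn1, hn2⟩
      constructor
      · by_contra h
        push_neg at h
        obtain ⟨e1, e2⟩ := h
        exact hA1 ⟨u1, u2, v1, v2, ⟨hc1, by simpa using e1⟩, ⟨hc2, by simpa using e2⟩, hn1, hn2⟩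
      · rintro ⟨e1, e2⟩
        exact hA2 ⟨u1, u2, v1, v2, ⟨hc1, e1⟩, ⟨hc2, e2⟩, hn1, hn2⟩
    · intro u1 v1 u2 v2 hc1 hc2 hn hFe
      by_contra h
      push_neg at h
      obtain ⟨e1, e2⟩ := h
      exact hC ⟨u1, u2, v1, v2, ⟨hc1, by simpa using e1⟩, ⟨hc2, by simpa using e2⟩, hn, hFe⟩
end

section
/- Let G = (U, V, E) be a bipartite graph. If G has a 2-chain subgraph cover, then the conflict graph G* of G is bipartite (2-colorable), where G* has vertex set E and two edges of G are adjacent in G* if they are in conflict in G. -/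
/-- If a bipartite graph has a 2-chain subgraph cover, then its conflict graph
is bipartite (2-colorable). -/
theorem stmt17 {U V : Type*} (E : U → V → Prop)
    (h : ∃ E1 E2 : U → V → Prop, ChainCover E E1 E2) :
    ∃ c : U → V → Bool, ∀ (u1 : U) (v1 : V) (u2 : U) (v2 : V),
      Confl E u1 v1 u2 v2 → c u1 v1 ≠ c u2 v2 := by
  classical
  obtain ⟨E1, E2, h1, h2, hcov, hk1, hk2⟩ := h
  refine ⟨fun u v => decide (E1 u v), fun u1 v1 u2 v2 hc => ?_⟩
  obtain ⟨he1, he2, hn12, hn21⟩ := hc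
  simp only [ne_eq, decide_eq_decide]
  intro hiff
  by_cases h11 : E1 u1 v1
  · exact hk1 ⟨u1, u2, v1, v2, h11, hiff.mp h11, fun hx => hn12 (h1 _ _ hx),
      fun hx => hn21 (h1 _ _ hx)⟩
  · have h21 : E2 u1 v1 := ((hcov u1 v1).mp he1).resolve_left h11
    have h22 : E2 u2 v2 := ((hcov u2 v2).mp he2).resolve_left (fun hx => h11 (hiff.mpr hx))
    exact hk2 ⟨u1, u2, v1, v2, h21, h22, fun hx => hn12 (h2 _ _ hx),
      fun hx => hn21 (h2 _ _ hx)⟩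
end
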